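/- Solvability of the implicit stage for the Broadwell model: given F, G, H ∈ ℝ and μ = aΔt/κ > 0 with G + 2H + F + 1/μ ≠ 0, the unique solution (f, g, h) of the system f = F + μQ, g = G + μQ, h = H - μQ with Q = h² - fg satisfying f + h = F + H and g + h = G + H is given by h = (μ(H+F)(H+G) + H)/(μ(G + 2H + F) + 1), f = H + F - h, g = H + G - h. -/

import Mathlib

theorem broadwell_implicit_stage_solvable (μ F G H : ℝ) (hμ : 0 < μ)
    (hden : G + 2*H + F + 1/μ ≠ 0) :
    let h0 := (μ*(H+F)*(H+G) + H) / (μ*(G + 2*H + F) + 1)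
    let f0 := H + F - h0
    let g0 := H + G - h0
    (f0 = F + μ*(h0^2 - f0*g0) ∧ g0 = G + μ*(h0^2 - f0*g0) ∧
      h0 = H - μ*(h0^2 - f0*g0)) ∧
    ∀ f g h : ℝ,
      f = F + μ*(h^2 - f*g) → g = G + μ*(h^2 - f*g) → h = H - μ*(h^2 - f*g) →
      f + h = F + H → g + h = G + H →
      f = f0 ∧ g = g0 ∧ h = h0 := by
  intro h0 f0 g0
  have hμ0 : μ ≠ 0 := ne_of_gt hμ
  have hd : μ*(G + 2*H + F) + 1 ≠ 0 := by
    have := mul_ne_zero hμ0 hden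
    field_simp at this
    convert this using 1
  have key : h0 * (μ*(G + 2*H + F) + 1) = μ*(H+F)*(H+G) + H := by
    simp only [h0]
    exact div_mul_cancel₀ _ hd
  have hh0 : h0 = H - μ*(h0^2 - f0*g0) := by
    simp only [f0, g0]; nlinarith [key]
  refine ⟨⟨by simp only [f0, g0] at hh0 ⊢; linarith, by simp only [f0, g0] at hh0 ⊢; linarith, hh0⟩, ?_⟩
  intro f g h hf hg hh hfh hgh
  have hf' : f = H + F - h := by linarith
  have hg' : g = H + G - h := by linarith
  have hlin : h * (μ*(G + 2*H + F) + 1) = μ*(H+F)*(H+G) + H := by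
    rw [hf', hg'] at hh; nlinarith
  have hhh : h = h0 := by
    have := key
    have : (h - h0) * (μ*(G + 2*H + F) + 1) = 0 := by linarith [key]
    rcases mul_eq_zero.1 this with h1 | h1
    · linarith
    · exact absurd h1 hd
  exact ⟨by rw [hf', hhh], by rw [hg', hhh], hhh⟩
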